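/- Let n be even and k even, with all e_p as defined satisfying e_p ≥ 2, and g ≥ 1. If 𝔫 | n, e_p ≥ 2 for all primes p | 𝔫, and e_2 is even when 𝔫 is even, then (n^{2g}/𝔫)·Π_{i=1}^k φ(n_i)·Π_{p|n/𝔫}(1-1/p^{2g})·Π_{p|𝔫}(1-(-1)^{e_p-1}/(p-1)^{e_p-1}) is a positive rational number, and in fact a positive integer. -/

import Mathlib

/-- `e_p` : the number of indices `i` with `p ∤ 𝔫 / n_i`. -/
def eC {k : ℕ} (nn : Fin k → ℕ) (p : ℕ) : ℕ :=
  (Finset.univ.filter (fun i => ¬ p ∣ Finset.univ.lcm nn / nn i)).card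

lemma my_totient_prod_superset {m : ℕ} (hm : m ≠ 0) {s : Finset ℕ} (hsub : m.primeFactors ⊆ s) :
    (m.totient : ℤ) = ∏ p ∈ s, ((p ^ (m.factorization p)).totient : ℤ) := by
  rw [Nat.multiplicative_factorization Nat.totient (fun x y h => Nat.totient_mul h)
    Nat.totient_one hm, Nat.prod_factorization_eq_prod_primeFactors]
  push_cast
  refine Finset.prod_subset hsub (fun p _ hp => ?_)
  rw [Finsupp.notMem_support_iff.mp (by rwa [Nat.support_factorization]), pow_zero,
    Nat.totient_one, Nat.cast_one]

lemma my_key_dvd (p v e : ℕ) (hv : 1 ≤ v) (he : 2 ≤ e) :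
    (p:ℤ)^v * ((p:ℤ)-1)^(e-1) ∣
      ((p:ℤ)^(v-1) * ((p:ℤ)-1))^e * (((p:ℤ)-1)^(e-1) - (-1)^(e-1)) := by
  rcases eq_or_lt_of_le hv with hv1 | hv2
  · have hpc : (p:ℤ) ∣ ((p:ℤ)-1)^(e-1) - (-1)^(e-1) := by
      have := sub_dvd_pow_sub_pow ((p:ℤ)-1) (-1) (e-1)
      simpa using this
    have h : (p:ℤ)^v * ((p:ℤ)-1)^(e-1) ∣
        (((p:ℤ)-1)^(e-1) - (-1)^(e-1)) * ((p:ℤ)-1)^e := by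
      rw [← hv1, pow_one]
      exact mul_dvd_mul hpc (pow_dvd_pow _ (Nat.sub_le e 1))
    refine h.trans (dvd_of_eq ?_)
    rw [← hv1]
    ring
  · apply dvd_mul_of_dvd_left
    rw [mul_pow, ← pow_mul]
    refine mul_dvd_mul (pow_dvd_pow _ ?_) (pow_dvd_pow _ (Nat.sub_le e 1))
    calc v ≤ (v-1)*2 := by omega
    _ ≤ (v-1)*e := Nat.mul_le_mul_left _ he

/-- Under the conditions of Harvey's criterion (with `n`, `k` even, `g ≥ 1`,
`𝔫 ∣ n`, `e_p ≥ 2` for all primes `p ∣ 𝔫`, and `e_2` even when `𝔫` is even),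
the counting expression
`(n^{2g}/𝔫) ∏_i φ(n_i) ∏_{p ∣ n/𝔫}(1-1/p^{2g}) ∏_{p ∣ 𝔫}(1-(-1)^{e_p-1}/(p-1)^{e_p-1})`
is a positive rational number, and in fact a positive integer. -/
theorem counting_expression_pos_int (g k n : ℕ) (hn : 0 < n) (hneven : Even n)
    (hkeven : Even k) (hg : 1 ≤ g) (nn : Fin k → ℕ) (hnn : ∀ i, 0 < nn i)
    (hdvd : Finset.univ.lcm nn ∣ n)
    (he : ∀ p : ℕ, p.Prime → p ∣ Finset.univ.lcm nn →
      2 ≤ (Finset.univ.filter (fun i => ¬ p ∣ Finset.univ.lcm nn / nn i)).card)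
    (he2 : Even (Finset.univ.lcm nn) →
      Even (Finset.univ.filter (fun i => ¬ 2 ∣ Finset.univ.lcm nn / nn i)).card) :
    0 < (n : ℚ) ^ (2 * g) / ((Finset.univ.lcm nn : ℕ) : ℚ) *
        (∏ i, (Nat.totient (nn i) : ℚ)) *
        (∏ p ∈ (n / Finset.univ.lcm nn).primeFactors, (1 - 1 / (p : ℚ) ^ (2 * g))) *
        (∏ p ∈ (Finset.univ.lcm nn).primeFactors,
          (1 - (-1 : ℚ) ^ ((Finset.univ.filter
              (fun i => ¬ p ∣ Finset.univ.lcm nn / nn i)).card - 1) /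
            ((p : ℚ) - 1) ^ ((Finset.univ.filter
              (fun i => ¬ p ∣ Finset.univ.lcm nn / nn i)).card - 1))) ∧
      ∃ m : ℕ, 0 < m ∧
        (n : ℚ) ^ (2 * g) / ((Finset.univ.lcm nn : ℕ) : ℚ) *
          (∏ i, (Nat.totient (nn i) : ℚ)) *
          (∏ p ∈ (n / Finset.univ.lcm nn).primeFactors, (1 - 1 / (p : ℚ) ^ (2 * g))) *
          (∏ p ∈ (Finset.univ.lcm nn).primeFactors,
            (1 - (-1 : ℚ) ^ ((Finset.univ.filter
                (fun i => ¬ p ∣ Finset.univ.lcm nn / nn i)).card - 1) /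
              ((p : ℚ) - 1) ^ ((Finset.univ.filter
                (fun i => ¬ p ∣ Finset.univ.lcm nn / nn i)).card - 1))) = m := by
  classical
  have heC : ∀ p : ℕ,
      (Finset.univ.filter (fun i => ¬ p ∣ Finset.univ.lcm nn / nn i)).card = eC nn p :=
    fun _ => rfl
  simp only [heC]
  set L := Finset.univ.lcm nn with hLdef
  have hL0 : L ≠ 0 := by
    intro h
    rw [h] at hdvd
    exact hn.ne' (Nat.eq_zero_of_zero_dvd hdvd)
  have hLpos : 0 < L := Nat.pos_of_ne_zero hL0
  set P1 := (n / L).primeFactors with hP1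
  set P2 := L.primeFactors with hP2
  have hnnL : ∀ i, nn i ∣ L := fun i => Finset.dvd_lcm (Finset.mem_univ i)
  have hp2 : ∀ p ∈ P2, p.Prime := fun p hp => Nat.prime_of_mem_primeFactors hp
  have hv1 : ∀ p ∈ P2, 1 ≤ L.factorization p := fun p hp =>
    (Nat.Prime.factorization_pos_of_dvd (hp2 p hp) hL0 (Nat.dvd_of_mem_primeFactors hp))
  have he2' : ∀ p ∈ P2, 2 ≤ eC nn p := fun p hp =>
    he p (hp2 p hp) (Nat.dvd_of_mem_primeFactors hp)
  -- the integer numerator and denominator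
  suffices hmain : ∃ t : ℤ, 0 < t ∧
      (n : ℚ) ^ (2 * g) / ((L : ℕ) : ℚ) * (∏ i, (Nat.totient (nn i) : ℚ)) *
        (∏ p ∈ P1, (1 - 1 / (p : ℚ) ^ (2 * g))) *
        (∏ p ∈ P2, (1 - (-1 : ℚ) ^ (eC nn p - 1) / ((p : ℚ) - 1) ^ (eC nn p - 1))) = (t : ℚ) by
    obtain ⟨t, ht, heq⟩ := hmain
    refine ⟨by rw [heq]; exact_mod_cast ht, t.toNat, by omega, ?_⟩
    rw [heq]
    exact_mod_cast (Int.toNat_of_nonneg ht.le).symm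
  -- abbreviations for the two integer quantities
  set A : ℤ := (n:ℤ)^(2*g) * (∏ i, ((nn i).totient : ℤ)) *
      (∏ p ∈ P1, ((p:ℤ)^(2*g) - 1)) *
      (∏ p ∈ P2, (((p:ℤ)-1)^(eC nn p - 1) - (-1)^(eC nn p - 1))) with hA
  set B : ℤ := (L:ℤ) * (∏ p ∈ P1, (p:ℤ)^(2*g)) *
      (∏ p ∈ P2, ((p:ℤ)-1)^(eC nn p - 1)) with hB
  -- Part 1 : divisibility coming from the primes dividing n / L
  have key1 : (∏ p ∈ P1, (p:ℤ)^(2*g)) ∣ (n:ℤ)^(2*g) := by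
    have h1 : (∏ p ∈ P1, p) ∣ n / L := Nat.prod_primeFactors_dvd _
    have h2 : n / L ∣ n := Nat.div_dvd_of_dvd hdvd
    have h3 : ((∏ p ∈ P1, p : ℕ) : ℤ) ∣ (n:ℤ) := Int.natCast_dvd_natCast.mpr (h1.trans h2)
    calc ∏ p ∈ P1, (p:ℤ)^(2*g) = (∏ p ∈ P1, (p:ℤ))^(2*g) := by rw [Finset.prod_pow]
    _ ∣ (n:ℤ)^(2*g) := pow_dvd_pow_of_dvd (by push_cast at h3 ⊢; exact h3) _
  -- Part 2 : divisibility coming from the primes dividing L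
  have hLfac : (L:ℤ) = ∏ p ∈ P2, (p:ℤ)^(L.factorization p) := by
    conv_lhs => rw [← Nat.factorization_prod_pow_eq_self hL0]
    rw [Nat.prod_factorization_eq_prod_primeFactors]
    push_cast
    rfl
  have htot : (∏ i, ((nn i).totient : ℤ)) =
      ∏ p ∈ P2, ∏ i, ((p ^ ((nn i).factorization p)).totient : ℤ) := by
    calc (∏ i, ((nn i).totient : ℤ))
        = ∏ i, ∏ p ∈ P2, ((p ^ ((nn i).factorization p)).totient : ℤ) :=
          Finset.prod_congr rfl fun i _ =>
            my_totient_prod_superset (hnn i).ne' (Nat.primeFactors_mono (hnnL i) hL0)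
    _ = ∏ p ∈ P2, ∏ i, ((p ^ ((nn i).factorization p)).totient : ℤ) := Finset.prod_comm
  have key2 : (L:ℤ) * (∏ p ∈ P2, ((p:ℤ)-1)^(eC nn p - 1)) ∣
      (∏ i, ((nn i).totient : ℤ)) *
        (∏ p ∈ P2, (((p:ℤ)-1)^(eC nn p - 1) - (-1)^(eC nn p - 1))) := by
    rw [hLfac, htot, ← Finset.prod_mul_distrib, ← Finset.prod_mul_distrib]
    refine Finset.prod_dvd_prod_of_dvd _ _ fun p hp => ?_
    have hpp := hp2 p hp
    have hv := hv1 p hp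
    have hep := he2' p hp
    have hfix : ∀ i ∈ Finset.univ.filter (fun i => ¬ p ∣ L / nn i),
        ((p ^ ((nn i).factorization p)).totient : ℤ) =
          (p:ℤ)^(L.factorization p - 1) * ((p:ℤ)-1) := by
      intro i hi
      have hi' := (Finset.mem_filter.mp hi).2
      have hfe : (nn i).factorization p = L.factorization p := by
        have hle : (nn i).factorization p ≤ L.factorization p :=
          (Nat.factorization_le_iff_dvd (hnn i).ne' hL0).mpr (hnnL i) p
        have hdiv0 : (L / nn i).factorization p = 0 :=
          Nat.factorization_eq_zero_of_not_dvd hi'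
        rw [Nat.factorization_div (hnnL i)] at hdiv0
        have := Finsupp.tsub_apply L.factorization (nn i).factorization p
        omega
      rw [hfe, Nat.totient_prime_pow hpp hv]
      push_cast [Nat.cast_sub hpp.one_le]
      ring
    have hsub : ((p:ℤ)^(L.factorization p - 1) * ((p:ℤ)-1))^(eC nn p) ∣
        ∏ i, ((p ^ ((nn i).factorization p)).totient : ℤ) := by
      have h1 := Finset.prod_dvd_prod_of_subset
        (Finset.univ.filter (fun i => ¬ p ∣ L / nn i)) Finset.univ
        (fun i => ((p ^ ((nn i).factorization p)).totient : ℤ))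
        (Finset.filter_subset _ _)
      rwa [Finset.prod_congr rfl hfix, Finset.prod_const] at h1
    exact dvd_trans (my_key_dvd p (L.factorization p) (eC nn p) hv hep)
      (mul_dvd_mul hsub dvd_rfl)
  -- combine the divisibilities
  have hBA : B ∣ A := by
    have h := (mul_dvd_mul key2 key1).mul_right (∏ p ∈ P1, ((p:ℤ)^(2*g) - 1))
    refine dvd_trans (dvd_of_eq ?_) (h.trans (dvd_of_eq ?_))
    · rw [hB]; ring
    · rw [hA]; ring
  -- positivity of A and B
  have hApos : 0 < A := by
    rw [hA]
    refine mul_pos (mul_pos (mul_pos ?_ ?_) ?_) ?_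
    · exact pow_pos (by exact_mod_cast hn) _
    · exact Finset.prod_pos fun i _ => by
        exact_mod_cast Nat.totient_pos.mpr (hnn i)
    · refine Finset.prod_pos fun p hp => ?_
      have h2 : (2:ℤ) ≤ (p:ℤ) := by
        exact_mod_cast (Nat.prime_of_mem_primeFactors hp).two_le
      have : (1:ℤ) < (p:ℤ)^(2*g) := one_lt_pow₀ (by linarith) (by omega)
      linarith
    · refine Finset.prod_pos fun p hp => ?_
      have hpp := hp2 p hp
      have hep := he2' p hp
      rcases eq_or_ne p 2 with rfl | hodd
      · have hLev : 2 ∣ L := Nat.dvd_of_mem_primeFactors hp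
        have heven : Even (eC nn 2) := by
          obtain ⟨c, hc⟩ := hLev
          exact he2 ⟨c, by omega⟩
        have hodd1 : Odd (eC nn 2 - 1) := Nat.Even.sub_odd (by omega) heven odd_one
        rw [hodd1.neg_one_pow]
        norm_num
      · have h3 : (3:ℤ) ≤ (p:ℤ) := by
          have := hpp.two_le
          exact_mod_cast (by omega : 3 ≤ p)
        have h1e : 1 ≤ eC nn p - 1 := by omega
        have hge : (2:ℤ) ≤ ((p:ℤ)-1)^(eC nn p - 1) := by
          calc (2:ℤ) = 2^1 := by norm_num
          _ ≤ 2^(eC nn p - 1) := pow_le_pow_right₀ (by norm_num) h1e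
          _ ≤ ((p:ℤ)-1)^(eC nn p - 1) := pow_le_pow_left₀ (by norm_num) (by linarith) _
        rcases neg_one_pow_eq_or ℤ (eC nn p - 1) with h | h <;> rw [h] <;> linarith
  have hBpos : 0 < B := by
    rw [hB]
    refine mul_pos (mul_pos (by exact_mod_cast hLpos) ?_) ?_
    · exact Finset.prod_pos fun p hp => pow_pos
        (by exact_mod_cast (Nat.prime_of_mem_primeFactors hp).pos) _
    · refine Finset.prod_pos fun p hp => pow_pos ?_ _
      have h2 : (2:ℤ) ≤ (p:ℤ) := by exact_mod_cast (hp2 p hp).two_le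
      linarith
  obtain ⟨t, hAt⟩ := hBA
  have htpos : 0 < t := by
    by_contra h
    push_neg at h
    nlinarith [hApos, hBpos, hAt]
  refine ⟨t, htpos, ?_⟩
  -- finally, the rational expression equals A / B = t
  have hLQ : ((L : ℕ) : ℚ) ≠ 0 := by exact_mod_cast hLpos.ne'
  have hD1 : ∀ p ∈ P1, ((p:ℚ)^(2*g)) ≠ 0 := fun p hp =>
    pow_ne_zero _ (by exact_mod_cast (Nat.prime_of_mem_primeFactors hp).pos.ne')
  have hD2 : ∀ p ∈ P2, ((p:ℚ)-1)^(eC nn p - 1) ≠ 0 := by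
    intro p hp
    have h2 : (2:ℚ) ≤ (p:ℚ) := by exact_mod_cast (hp2 p hp).two_le
    exact pow_ne_zero _ (by linarith)
  have hprod1 : ∏ p ∈ P1, (1 - 1/(p:ℚ)^(2*g)) =
      (∏ p ∈ P1, ((p:ℚ)^(2*g) - 1)) / ∏ p ∈ P1, (p:ℚ)^(2*g) := by
    rw [← Finset.prod_div_distrib]
    refine Finset.prod_congr rfl fun p hp => ?_
    rw [sub_div, div_self (hD1 p hp)]
  have hprod2 : ∏ p ∈ P2, (1 - (-1:ℚ)^(eC nn p - 1) / ((p:ℚ)-1)^(eC nn p - 1)) =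
      (∏ p ∈ P2, (((p:ℚ)-1)^(eC nn p - 1) - (-1)^(eC nn p - 1))) /
        ∏ p ∈ P2, ((p:ℚ)-1)^(eC nn p - 1) := by
    rw [← Finset.prod_div_distrib]
    refine Finset.prod_congr rfl fun p hp => ?_
    rw [sub_div, div_self (hD2 p hp)]
  have hProdD1 : (∏ p ∈ P1, (p:ℚ)^(2*g)) ≠ 0 := Finset.prod_ne_zero_iff.mpr hD1
  have hProdD2 : (∏ p ∈ P2, ((p:ℚ)-1)^(eC nn p - 1)) ≠ 0 := Finset.prod_ne_zero_iff.mpr hD2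
  have hEB : ((n : ℚ) ^ (2 * g) / ((L : ℕ) : ℚ) * (∏ i, (Nat.totient (nn i) : ℚ)) *
        (∏ p ∈ P1, (1 - 1 / (p : ℚ) ^ (2 * g))) *
        (∏ p ∈ P2, (1 - (-1 : ℚ) ^ (eC nn p - 1) / ((p : ℚ) - 1) ^ (eC nn p - 1)))) *
      ((B : ℤ) : ℚ) = ((A : ℤ) : ℚ) := by
    rw [hprod1, hprod2, hA, hB]
    push_cast
    field_simp
    try ring
  have hBQ : ((B : ℤ) : ℚ) ≠ 0 := by exact_mod_cast hBpos.ne'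
  have hcast : ((A : ℤ) : ℚ) = (t : ℚ) * ((B : ℤ) : ℚ) := by rw [hAt]; push_cast; ring
  rw [hcast] at hEB
  exact mul_right_cancel₀ hBQ hEB
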